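/- Let B₁,…,B_k be negatively correlated Bernoulli random variables (meaning E[Π_{i∈S} B_i] ≤ Π_{i∈S} E[B_i] for all subsets S, and the same for the complements 1−B_i), let β_i ∈ [0,1], X = Σ_i β_i B_i, and μ ≤ E[X]. Then for every δ ∈ (0,1), Pr[X < (1−δ)μ] < (e^{−δ}/(1−δ)^{1−δ})^μ. -/

import Mathlib

open MeasureTheory Finset

private lemma integrable_of_bdd {Ω : Type*} [MeasurableSpace Ω] (P : Measure Ω)
    [IsProbabilityMeasure P] (f : Ω → ℝ) (hf : Measurable f) (M : ℝ)
    (h : ∀ ω, |f ω| ≤ M) : Integrable f P :=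
  (integrable_const M).mono' hf.aestronglyMeasurable
    (Filter.Eventually.of_forall (by simpa [Real.norm_eq_abs] using h))

/-- Multiplicative Chernoff lower-tail bound for a weighted sum of negatively
correlated Bernoulli random variables. -/
theorem chernoff_lower_tail_negatively_correlated
    {Ω : Type*} [MeasurableSpace Ω] (P : Measure Ω) [IsProbabilityMeasure P]
    (k : ℕ) (B : Fin k → Ω → ℝ)
    (hmeas : ∀ i, Measurable (B i))
    (hBernoulli : ∀ i ω, B i ω = 0 ∨ B i ω = 1)
    (hneg : ∀ S : Finset (Fin k),
      (∫ ω, ∏ i ∈ S, B i ω ∂P) ≤ ∏ i ∈ S, ∫ ω, B i ω ∂P)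
    (hnegCompl : ∀ S : Finset (Fin k),
      (∫ ω, ∏ i ∈ S, (1 - B i ω) ∂P) ≤ ∏ i ∈ S, ∫ ω, (1 - B i ω) ∂P)
    (β : Fin k → ℝ) (hβ : ∀ i, β i ∈ Set.Icc (0:ℝ) 1)
    (X : Ω → ℝ) (hX : X = fun ω => ∑ i, β i * B i ω)
    (μ : ℝ) (hμ : μ ≤ ∫ ω, X ω ∂P)
    (δ : ℝ) (hδ : δ ∈ Set.Ioo (0:ℝ) 1) :
    (P {ω | X ω < (1 - δ) * μ}).toReal
      < (Real.exp (-δ) / (1 - δ) ^ (1 - δ)) ^ μ := by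
  obtain ⟨hδ0, hδ1⟩ := hδ
  have h1δ : (0:ℝ) < 1 - δ := by linarith
  set t : ℝ := -Real.log (1 - δ) with ht_def
  have ht : 0 < t := by
    have := Real.log_neg h1δ (by linarith)
    simp only [ht_def]; linarith
  have hexp_t : Real.exp (-t) = 1 - δ := by
    rw [ht_def, neg_neg, Real.exp_log h1δ]
  have hB0 : ∀ i ω, 0 ≤ B i ω := fun i ω => by rcases hBernoulli i ω with h | h <;> rw [h] <;> norm_num
  have hB1 : ∀ i ω, B i ω ≤ 1 := fun i ω => by rcases hBernoulli i ω with h | h <;> rw [h] <;> norm_num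
  set c : Fin k → ℝ := fun i => Real.exp (-(t * β i)) with hc_def
  set d : Fin k → ℝ := fun i => 1 - c i with hd_def
  have hc_pos : ∀ i, 0 < c i := fun i => Real.exp_pos _
  have hc_le1 : ∀ i, c i ≤ 1 := fun i =>
    Real.exp_le_one_iff.2 (by nlinarith [(hβ i).1, ht.le])
  have hd_nonneg : ∀ i, 0 ≤ d i := fun i => by
    have := hc_le1 i; simp only [hd_def]; linarith
  have hd_ge : ∀ i, δ * β i ≤ d i := by
    intro i
    obtain ⟨hb0, hb1⟩ := hβ i
    have key := convexOn_exp.2 (Set.mem_univ (-t)) (Set.mem_univ (0:ℝ))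
      hb0 (sub_nonneg.2 hb1) (by ring)
    simp only [smul_eq_mul, mul_zero, add_zero, Real.exp_zero, mul_one, hexp_t] at key
    have hkey : c i ≤ 1 - δ * β i := by
      have : β i * -t = -(t * β i) := by ring
      rw [this] at key
      simp only [hc_def]; nlinarith
    simp only [hd_def]; linarith
  -- p and q
  set p : Fin k → ℝ := fun i => ∫ ω, B i ω ∂P with hp_def
  set q : Fin k → ℝ := fun i => ∫ ω, (1 - B i ω) ∂P with hq_def
  have hint_B : ∀ i, Integrable (B i) P := fun i =>
    integrable_of_bdd P _ (hmeas i) 1 (fun ω => abs_le.2 ⟨by linarith [hB0 i ω], hB1 i ω⟩)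
  have hp0 : ∀ i, 0 ≤ p i := fun i => integral_nonneg (fun ω => hB0 i ω)
  have hp1 : ∀ i, p i ≤ 1 := fun i => by
    have : ∫ ω, B i ω ∂P ≤ ∫ _ω, (1:ℝ) ∂P :=
      integral_mono (hint_B i) (integrable_const 1) (fun ω => hB1 i ω)
    simpa using this
  have hq_eq : ∀ i, q i = 1 - p i := fun i => by
    simp only [hq_def, hp_def]
    rw [integral_sub (integrable_const 1) (hint_B i)]
    simp
  have hq0 : ∀ i, 0 ≤ q i := fun i => by rw [hq_eq]; linarith [hp1 i]
  -- integrability of products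
  have hprod_meas : ∀ S : Finset (Fin k), Measurable (fun ω => ∏ i ∈ S, (1 - B i ω)) :=
    fun S => Finset.measurable_prod S (fun i _ => measurable_const.sub (hmeas i))
  have hprod_nonneg : ∀ (S : Finset (Fin k)) ω, 0 ≤ ∏ i ∈ S, (1 - B i ω) :=
    fun S ω => Finset.prod_nonneg fun i _ => by linarith [hB1 i ω]
  have hprod_le1 : ∀ (S : Finset (Fin k)) ω, ∏ i ∈ S, (1 - B i ω) ≤ 1 :=
    fun S ω => Finset.prod_le_one (fun i _ => by linarith [hB1 i ω]) (fun i _ => by linarith [hB0 i ω])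
  have hprod_int : ∀ S : Finset (Fin k), Integrable (fun ω => ∏ i ∈ S, (1 - B i ω)) P :=
    fun S => integrable_of_bdd P _ (hprod_meas S) 1
      (fun ω => abs_le.2 ⟨by linarith [hprod_nonneg S ω], hprod_le1 S ω⟩)
  -- Y
  set Y : Ω → ℝ := fun ω => ∏ i, (c i + d i * (1 - B i ω)) with hY_def
  have hXnn : ∀ ω, 0 ≤ X ω := by
    intro ω; rw [hX]
    exact Finset.sum_nonneg fun i _ => mul_nonneg (hβ i).1 (hB0 i ω)
  have hYeq : ∀ ω, Real.exp (-t * X ω) = Y ω := by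
    intro ω
    rw [hX]
    simp only
    rw [show -t * ∑ i, β i * B i ω = ∑ i, (-(t * β i)) * B i ω by rw [Finset.mul_sum]; exact Finset.sum_congr rfl fun i _ => by ring,
      Real.exp_sum]
    refine Finset.prod_congr rfl fun i _ => ?_
    rcases hBernoulli i ω with h | h <;> rw [h] <;> simp [hc_def, hd_def]
  have hfac_nonneg : ∀ i ω, 0 ≤ c i + d i * (1 - B i ω) := fun i ω =>
    add_nonneg (hc_pos i).le (mul_nonneg (hd_nonneg i) (by linarith [hB1 i ω]))
  have hfac_le1 : ∀ i ω, c i + d i * (1 - B i ω) ≤ 1 := fun i ω => by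
    have h1 : d i * (1 - B i ω) ≤ d i * 1 :=
      mul_le_mul_of_nonneg_left (by linarith [hB0 i ω]) (hd_nonneg i)
    simp only [hd_def] at *; linarith
  have hY0 : ∀ ω, 0 ≤ Y ω := fun ω => Finset.prod_nonneg fun i _ => hfac_nonneg i ω
  have hYmeas : Measurable Y :=
    Finset.measurable_prod _ (fun i _ =>
      measurable_const.add (((measurable_const.sub (hmeas i))).const_mul (d i)))
  have hYint : Integrable Y P := integrable_of_bdd P _ hYmeas 1
    (fun ω => abs_le.2 ⟨by linarith [hY0 ω],
      Finset.prod_le_one (fun i _ => hfac_nonneg i ω) (fun i _ => hfac_le1 i ω)⟩)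
  -- Step A
  have stepA : ∫ ω, Y ω ∂P ≤ ∏ i, (c i + d i * q i) := by
    have e1 : Y = fun ω => ∑ S ∈ (Finset.univ : Finset (Fin k)).powerset,
        ((∏ i ∈ S, c i) * ∏ i ∈ Finset.univ \ S, d i) * ∏ i ∈ Finset.univ \ S, (1 - B i ω) := by
      funext ω
      rw [hY_def]
      simp only
      rw [Finset.prod_add]
      refine Finset.sum_congr rfl fun S _ => ?_
      rw [Finset.prod_mul_distrib]; ring
    have hcd_nonneg : ∀ S : Finset (Fin k),
        0 ≤ (∏ i ∈ S, c i) * ∏ i ∈ Finset.univ \ S, d i :=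
      fun S => mul_nonneg (Finset.prod_nonneg fun i _ => (hc_pos i).le)
        (Finset.prod_nonneg fun i _ => hd_nonneg i)
    calc ∫ ω, Y ω ∂P
        = ∑ S ∈ (Finset.univ : Finset (Fin k)).powerset,
            ((∏ i ∈ S, c i) * ∏ i ∈ Finset.univ \ S, d i) *
              ∫ ω, ∏ i ∈ Finset.univ \ S, (1 - B i ω) ∂P := by
          rw [e1, integral_finset_sum _ (fun S _ => (hprod_int _).const_mul _)]
          exact Finset.sum_congr rfl fun S _ => integral_const_mul _ _
      _ ≤ ∑ S ∈ (Finset.univ : Finset (Fin k)).powerset,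
            ((∏ i ∈ S, c i) * ∏ i ∈ Finset.univ \ S, d i) * ∏ i ∈ Finset.univ \ S, q i := by
          refine Finset.sum_le_sum fun S _ => ?_
          exact mul_le_mul_of_nonneg_left (hnegCompl _) (hcd_nonneg S)
      _ = ∏ i, (c i + d i * q i) := by
          rw [Finset.prod_add]
          exact Finset.sum_congr rfl fun S _ => by rw [Finset.prod_mul_distrib]; ring
  -- Step B
  have hEX : ∫ ω, X ω ∂P = ∑ i, β i * p i := by
    rw [hX, integral_finset_sum _ (fun i _ => (hint_B i).const_mul _)]
    exact Finset.sum_congr rfl fun i _ => integral_const_mul _ _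
  have stepB : ∏ i, (c i + d i * q i) ≤ Real.exp (-(δ * μ)) := by
    have hfac : ∀ i, c i + d i * q i ≤ Real.exp (-(d i * p i)) := by
      intro i
      have h1 : c i + d i * q i = 1 - d i * p i := by
        rw [hq_eq]; simp only [hd_def]; ring
      have h2 := Real.add_one_le_exp (-(d i * p i))
      rw [h1]; linarith
    have hfac0 : ∀ i, 0 ≤ c i + d i * q i := fun i =>
      add_nonneg (hc_pos i).le (mul_nonneg (hd_nonneg i) (hq0 i))
    calc ∏ i, (c i + d i * q i)
        ≤ ∏ i, Real.exp (-(d i * p i)) :=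
          Finset.prod_le_prod (fun i _ => hfac0 i) (fun i _ => hfac i)
      _ = Real.exp (∑ i, -(d i * p i)) := (Real.exp_sum _ _).symm
      _ ≤ Real.exp (-(δ * μ)) := by
          apply Real.exp_le_exp.2
          have h1 : ∀ i ∈ (Finset.univ : Finset (Fin k)), -(d i * p i) ≤ -(δ * (β i * p i)) := by
            intro i _
            have := mul_le_mul_of_nonneg_right (hd_ge i) (hp0 i)
            nlinarith
          calc ∑ i, -(d i * p i) ≤ ∑ i, -(δ * (β i * p i)) := Finset.sum_le_sum h1
            _ = -(δ * ∑ i, β i * p i) := by simp [Finset.mul_sum]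
            _ ≤ -(δ * μ) := by
                rw [← hEX]
                have : δ * μ ≤ δ * ∫ ω, X ω ∂P := mul_le_mul_of_nonneg_left hμ hδ0.le
                linarith
  have hmain : ∫ ω, Y ω ∂P ≤ Real.exp (-(δ * μ)) := le_trans stepA stepB
  -- Step C: Markov with strictness
  have hXmeas : Measurable X := by
    rw [hX]; exact Finset.measurable_sum _ (fun i _ => (hmeas i).const_mul _)
  set A : Set Ω := {ω | X ω < (1 - δ) * μ} with hA_def
  have hAm : MeasurableSet A := measurableSet_lt hXmeas measurable_const
  set c0 : ℝ := Real.exp (-t * ((1 - δ) * μ)) with hc0_def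
  have hc0_pos : 0 < c0 := Real.exp_pos _
  have hYgt : ∀ ω ∈ A, c0 < Y ω := by
    intro ω hω
    rw [← hYeq]
    apply Real.exp_lt_exp.2
    have : X ω < (1 - δ) * μ := hω
    nlinarith
  -- RHS equals exp(-(δ*μ))/c0
  have hRHS : (Real.exp (-δ) / (1 - δ) ^ (1 - δ)) ^ μ = Real.exp (-(δ * μ)) / c0 := by
    rw [Real.rpow_def_of_pos h1δ, ← Real.exp_sub, ← Real.exp_mul, hc0_def, ← Real.exp_sub]
    congr 1
    have hlog : Real.log (1 - δ) = -t := by rw [ht_def, neg_neg]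
    rw [hlog]; ring
  have hRHS_pos : 0 < (Real.exp (-δ) / (1 - δ) ^ (1 - δ)) ^ μ := by
    rw [hRHS]; positivity
  rcases eq_or_ne (P A) 0 with hzero | hne
  · rw [hA_def] at hzero
    rw [hzero]
    simpa using hRHS_pos
  · have hPA : 0 < P A := pos_iff_ne_zero.2 hne
    have hmpos : 0 < (P A).toReal := ENNReal.toReal_pos hne (measure_ne_top P A)
    have hYc0_int : Integrable (fun ω => Y ω - c0) P := hYint.sub (integrable_const c0)
    have hpos : 0 < ∫ ω in A, (Y ω - c0) ∂P := by
      rw [setIntegral_pos_iff_support_of_nonneg_ae]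
      · refine lt_of_lt_of_le hPA (measure_mono ?_)
        intro ω hω
        exact ⟨ne_of_gt (sub_pos.2 (hYgt ω hω)), hω⟩
      · rw [Filter.EventuallyLE, ae_restrict_iff' hAm]
        exact Filter.Eventually.of_forall fun ω hω => sub_nonneg.2 (hYgt ω hω).le
      · exact hYc0_int.integrableOn
    have hsplit : ∫ ω in A, (Y ω - c0) ∂P
        = (∫ ω in A, Y ω ∂P) - c0 * (P A).toReal := by
      rw [integral_sub hYint.integrableOn (integrableOn_const (measure_ne_top P A))]
      rw [setIntegral_const]
      simp [mul_comm, smul_eq_mul, measureReal_def]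
    have hle : ∫ ω in A, Y ω ∂P ≤ ∫ ω, Y ω ∂P :=
      setIntegral_le_integral hYint (Filter.Eventually.of_forall hY0)
    have hlt : c0 * (P A).toReal < Real.exp (-(δ * μ)) := by
      rw [hsplit] at hpos; linarith
    rw [hRHS]
    rw [lt_div_iff₀ hc0_pos]
    show (P A).toReal * c0 < _
    rw [mul_comm]
    exact hlt
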